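/- Let K = F_q(t) with q a power of the prime p. Suppose f ∈ K[x₁^p, …, xₙ^p] (i.e., f is a polynomial in the p-th powers of the variables) is squarefree as an element of K[x₁,…,xₙ]. Then f and ∂f/∂t are relatively prime in K[x₁,…,xₙ]. -/

import Mathlib

open MvPolynomial

section Helpers

variable {σ : Type*}

private lemma myDegreeAdd (u v : σ →₀ ℕ) : (u + v).degree = u.degree + v.degree := by
  simp [Finsupp.degree_eq_weight_one]

private lemma myTotalDegreeEq {R : Type*} [CommSemiring R] (f : MvPolynomial σ R) :
    f.totalDegree = f.support.sup Finsupp.degree := by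
  rw [MvPolynomial.totalDegree]
  congr 1

private lemma myDegLe {R : Type*} [CommSemiring R] {f : MvPolynomial σ R} {m : σ →₀ ℕ}
    (h : m ∈ f.support) : m.degree ≤ f.totalDegree := by
  rw [myTotalDegreeEq]
  exact Finset.le_sup h

private lemma myExistsTop {R : Type*} [CommSemiring R] {f : MvPolynomial σ R} (hf : f ≠ 0) :
    ∃ m ∈ f.support, m.degree = f.totalDegree := by
  obtain ⟨m, hm, he⟩ := f.support.exists_mem_eq_sup
    (MvPolynomial.support_nonempty.mpr hf) Finsupp.degree
  exact ⟨m, hm, by rw [myTotalDegreeEq, he]⟩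

private lemma myCoeffTopMul {R : Type*} [CommRing R] {a b : MvPolynomial σ R} {d : σ →₀ ℕ}
    (hd : d.degree = a.totalDegree + b.totalDegree) :
    MvPolynomial.coeff d (a * b) =
      MvPolynomial.coeff d (homogeneousComponent a.totalDegree a *
        homogeneousComponent b.totalDegree b) := by
  classical
  rw [coeff_mul, coeff_mul]
  apply Finset.sum_congr rfl
  rintro ⟨u, v⟩ huv
  rw [Finset.HasAntidiagonal.mem_antidiagonal] at huv
  rw [coeff_homogeneousComponent, coeff_homogeneousComponent]
  have hsum : u.degree + v.degree = a.totalDegree + b.totalDegree := by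
    rw [← myDegreeAdd, huv, hd]
  by_cases hu : u.degree = a.totalDegree
  · have hv : v.degree = b.totalDegree := by omega
    rw [if_pos hu, if_pos hv]
  · rw [if_neg hu]
    rcases lt_or_gt_of_ne hu with hlt | hgt
    · have hv : b.totalDegree < v.degree := by omega
      have hv0 : MvPolynomial.coeff v b = 0 := by
        by_contra hc
        exact absurd (myDegLe (mem_support_iff.mpr hc)) (not_le.mpr hv)
      rw [hv0]
      ring
    · have hu0 : MvPolynomial.coeff u a = 0 := by
        by_contra hc
        exact absurd (myDegLe (mem_support_iff.mpr hc)) (not_le.mpr hgt)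
      rw [hu0]
      ring

private lemma myTotalDegreeMul {R : Type*} [CommRing R] [IsDomain R] {a b : MvPolynomial σ R}
    (ha : a ≠ 0) (hb : b ≠ 0) :
    (a * b).totalDegree = a.totalDegree + b.totalDegree := by
  classical
  refine le_antisymm (totalDegree_mul a b) ?_
  set La := homogeneousComponent a.totalDegree a with hLadef
  set Lb := homogeneousComponent b.totalDegree b with hLbdef
  have hLa : La ≠ 0 := by
    obtain ⟨m, hm, he⟩ := myExistsTop ha
    intro h0
    have hcoeff : MvPolynomial.coeff m La = MvPolynomial.coeff m a := by
      rw [hLadef, coeff_homogeneousComponent, if_pos he]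
    rw [h0, coeff_zero] at hcoeff
    exact (mem_support_iff.mp hm) hcoeff.symm
  have hLb : Lb ≠ 0 := by
    obtain ⟨m, hm, he⟩ := myExistsTop hb
    intro h0
    have hcoeff : MvPolynomial.coeff m Lb = MvPolynomial.coeff m b := by
      rw [hLbdef, coeff_homogeneousComponent, if_pos he]
    rw [h0, coeff_zero] at hcoeff
    exact (mem_support_iff.mp hm) hcoeff.symm
  have hmul : La * Lb ≠ 0 := mul_ne_zero hLa hLb
  obtain ⟨d, hd⟩ : ∃ d, MvPolynomial.coeff d (La * Lb) ≠ 0 := by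
    by_contra hcon
    push_neg at hcon
    exact hmul (MvPolynomial.ext _ _ fun d => by rw [hcon d, coeff_zero])
  have hhom : (La * Lb).IsHomogeneous (a.totalDegree + b.totalDegree) :=
    (homogeneousComponent_isHomogeneous _ _).mul (homogeneousComponent_isHomogeneous _ _)
  have hdeg : d.degree = a.totalDegree + b.totalDegree := by
    have := hhom hd
    rw [Finsupp.degree_eq_weight_one]
    exact this
  have hne : MvPolynomial.coeff d (a * b) ≠ 0 := by
    rw [myCoeffTopMul hdeg]
    exact hd
  calc a.totalDegree + b.totalDegree = d.degree := hdeg.symm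
    _ ≤ (a * b).totalDegree := myDegLe (mem_support_iff.mpr hne)

private lemma myTdMono {R : Type*} [CommSemiring R] {f g : MvPolynomial σ R}
    (h : g.support ⊆ f.support) : g.totalDegree ≤ f.totalDegree := by
  rw [myTotalDegreeEq, myTotalDegreeEq]
  exact Finset.sup_mono h

private lemma myEqC {R : Type*} [CommSemiring R] {u : MvPolynomial σ R}
    (h : u.totalDegree = 0) : u = MvPolynomial.C (MvPolynomial.coeff 0 u) := by
  classical
  apply MvPolynomial.ext
  intro m
  by_cases hm : m = 0
  · subst hm
    simp
  · rw [coeff_C, if_neg (Ne.symm hm)]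
    by_contra hc
    have hmem : m ∈ u.support := mem_support_iff.mpr hc
    have := (totalDegree_eq_zero_iff _ u).mp h m hmem
    exact hm (Finsupp.ext this)

end Helpers

section DP

variable {σ : Type*} {Fq K : Type*} [CommSemiring Fq] [CommRing K] [Algebra Fq K]

/-- Coefficientwise application of a derivation to a multivariate polynomial. -/
private noncomputable def myDP (D : Derivation Fq K K) (f : MvPolynomial σ K) :
    MvPolynomial σ K :=
  ∑ m ∈ f.support, MvPolynomial.monomial m (D (MvPolynomial.coeff m f))

private lemma myCoeffDP (D : Derivation Fq K K) (f : MvPolynomial σ K) (m : σ →₀ ℕ) :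
    MvPolynomial.coeff m (myDP D f) = D (MvPolynomial.coeff m f) := by
  classical
  rw [myDP, coeff_sum]
  simp only [coeff_monomial]
  rw [Finset.sum_ite_eq' f.support m (fun m' => D (MvPolynomial.coeff m' f))]
  split_ifs with h
  · rfl
  · rw [notMem_support_iff.mp h, map_zero]

private lemma myDsum (D : Derivation Fq K K) {ι : Type*} (s : Finset ι) (F : ι → K) :
    D (∑ i ∈ s, F i) = ∑ i ∈ s, D (F i) :=
  map_sum D.toLinearMap F s

private lemma myDPMul (D : Derivation Fq K K) (f g : MvPolynomial σ K) :
    myDP D (f * g) = myDP D f * g + f * myDP D g := by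
  classical
  apply MvPolynomial.ext
  intro m
  rw [coeff_add, myCoeffDP, coeff_mul, coeff_mul, coeff_mul, myDsum, ← Finset.sum_add_distrib]
  apply Finset.sum_congr rfl
  rintro ⟨u, v⟩ _
  rw [myCoeffDP, myCoeffDP, Derivation.leibniz, smul_eq_mul, smul_eq_mul]
  ring

private lemma myDPsupp (D : Derivation Fq K K) (f : MvPolynomial σ K) :
    (myDP D f).support ⊆ f.support := by
  intro m hm
  rw [mem_support_iff] at hm ⊢
  intro h
  apply hm
  rw [myCoeffDP, h, map_zero]

end DP

section Pderiv

variable {σ : Type*} {K : Type*} [CommRing K]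

private lemma myCoeffPderiv (i : σ) (f : MvPolynomial σ K) (m : σ →₀ ℕ) :
    MvPolynomial.coeff m (MvPolynomial.pderiv i f) =
      ((m i + 1 : ℕ) : K) * MvPolynomial.coeff (m + Finsupp.single i 1) f := by
  classical
  conv_lhs => rw [f.as_sum]
  rw [map_sum, coeff_sum]
  have hterm : ∀ m' ∈ f.support,
      MvPolynomial.coeff m (MvPolynomial.pderiv i (MvPolynomial.monomial m'
        (MvPolynomial.coeff m' f))) =
      if m' = m + Finsupp.single i 1 then ((m i + 1 : ℕ) : K) * MvPolynomial.coeff m' f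
      else 0 := by
    intro m' _
    rw [pderiv_monomial, coeff_monomial]
    by_cases h : m' = m + Finsupp.single i 1
    · subst h
      rw [if_pos rfl, if_pos (add_tsub_cancel_right _ _)]
      have happ : ((m + Finsupp.single i 1 : σ →₀ ℕ)) i = m i + 1 := by
        rw [Finsupp.add_apply, Finsupp.single_eq_same]
      rw [happ, mul_comm]
    · rw [if_neg h]
      by_cases h2 : m' - Finsupp.single i 1 = m
      · rw [if_pos h2]
        by_cases h3 : m' i = 0
        · rw [h3, Nat.cast_zero, mul_zero]
        · exfalso
          apply h
          have hle : Finsupp.single i 1 ≤ m' :=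
            Finsupp.single_le_iff.mpr (Nat.one_le_iff_ne_zero.mpr h3)
          rw [← h2, tsub_add_cancel_of_le hle]
      · rw [if_neg h2]
  rw [Finset.sum_congr rfl hterm,
    Finset.sum_ite_eq' f.support (m + Finsupp.single i 1)
      (fun m' => ((m i + 1 : ℕ) : K) * MvPolynomial.coeff m' f)]
  split_ifs with h
  · rfl
  · rw [notMem_support_iff.mp h, mul_zero]

private lemma myPderivDegLt {i : σ} {f : MvPolynomial σ K}
    (h : MvPolynomial.pderiv i f ≠ 0) :
    (MvPolynomial.pderiv i f).totalDegree < f.totalDegree := by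
  classical
  have hkey : ∀ m ∈ (MvPolynomial.pderiv i f).support, m.degree < f.totalDegree := by
    intro m hm
    have hc := mem_support_iff.mp hm
    rw [myCoeffPderiv] at hc
    have hc2 : MvPolynomial.coeff (m + Finsupp.single i 1) f ≠ 0 :=
      fun h0 => hc (by rw [h0, mul_zero])
    have hle : (m + Finsupp.single i 1).degree ≤ f.totalDegree :=
      myDegLe (mem_support_iff.mpr hc2)
    rw [myDegreeAdd] at hle
    have hsingle : (Finsupp.single i 1 : σ →₀ ℕ).degree = 1 := by
      exact Finsupp.degree_single i 1
    omega
  obtain ⟨m0, hm0⟩ := MvPolynomial.support_nonempty.mpr h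
  have hpos : 0 < f.totalDegree := lt_of_le_of_lt (Nat.zero_le _) (hkey m0 hm0)
  rw [myTotalDegreeEq]
  exact Finset.sup_lt_iff hpos |>.mpr hkey

end Pderiv

section DvdLemma

private lemma myDvdZero {σ : Type*} {K : Type*} [CommRing K] [IsDomain K]
    {q r : MvPolynomial σ K} (hq : q ≠ 0) (hdvd : q ∣ r)
    (hlt : r.totalDegree < q.totalDegree) : r = 0 := by
  by_contra h
  obtain ⟨u, rfl⟩ := hdvd
  have hu : u ≠ 0 := by rintro rfl; rw [mul_zero] at h; exact h rfl
  rw [myTotalDegreeMul hq hu] at hlt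
  omega

end DvdLemma

section RatFuncLemma

private lemma myDerivAlgebraMap {Fq : Type*} [Field Fq]
    (D : Derivation Fq (RatFunc Fq) (RatFunc Fq)) (hD : D RatFunc.X = 1)
    (u : Polynomial Fq) :
    D (algebraMap (Polynomial Fq) (RatFunc Fq) u) =
      algebraMap (Polynomial Fq) (RatFunc Fq) (Polynomial.derivative u) := by
  have hext : D.compAlgebraMap (Polynomial Fq) =
      Polynomial.mkDerivation Fq (1 : RatFunc Fq) := by
    apply Polynomial.derivation_ext
    rw [Polynomial.mkDerivation_X]
    show D (algebraMap (Polynomial Fq) (RatFunc Fq) Polynomial.X) = 1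
    rw [RatFunc.algebraMap_X, hD]
  have happ := DFunLike.congr_fun hext u
  rw [Polynomial.mkDerivation_apply] at happ
  rw [show D (algebraMap (Polynomial Fq) (RatFunc Fq) u) =
      D.compAlgebraMap (Polynomial Fq) u from rfl, happ, Algebra.smul_def, mul_one]

private lemma myRatFuncPow (p : ℕ) [Fact p.Prime] (Fq : Type*) [Field Fq] [Fintype Fq]
    [CharP Fq p] (D : Derivation Fq (RatFunc Fq) (RatFunc Fq)) (hD : D RatFunc.X = 1)
    (r : RatFunc Fq) (hr : D r = 0) : ∃ s : RatFunc Fq, s ^ p = r := by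
  classical
  have hp : p.Prime := Fact.out
  set u := r.num with hu
  set v := r.denom with hv
  have hv0 : v ≠ 0 := r.denom_ne_zero
  have hvK : algebraMap (Polynomial Fq) (RatFunc Fq) v ≠ 0 := RatFunc.algebraMap_ne_zero hv0
  have hru : r * algebraMap (Polynomial Fq) (RatFunc Fq) v =
      algebraMap (Polynomial Fq) (RatFunc Fq) u := by
    rw [← RatFunc.num_div_denom r, div_mul_cancel₀ _ hvK]
  have hD2 : algebraMap (Polynomial Fq) (RatFunc Fq) (Polynomial.derivative u) =
      r * algebraMap (Polynomial Fq) (RatFunc Fq) (Polynomial.derivative v) := by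
    have hcong := congrArg D hru
    rw [Derivation.leibniz, hr, smul_zero, add_zero, smul_eq_mul,
      myDerivAlgebraMap D hD, myDerivAlgebraMap D hD] at hcong
    exact hcong.symm
  have key : Polynomial.derivative u * v = u * Polynomial.derivative v := by
    apply RatFunc.algebraMap_injective Fq
    rw [map_mul, map_mul, hD2, ← hru]
    ring
  have hco : IsCoprime u v := r.isCoprime_num_denom
  have hdvdv : v ∣ Polynomial.derivative v := by
    have hdvd : v ∣ u * Polynomial.derivative v := ⟨Polynomial.derivative u, by
      rw [← key]; ring⟩
    exact (hco.symm).dvd_of_dvd_mul_left hdvd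
  have hdv : Polynomial.derivative v = 0 := Polynomial.dvd_derivative_iff.mp hdvdv
  have hdu : Polynomial.derivative u = 0 := by
    have h0 : Polynomial.derivative u * v = 0 := by rw [key, hdv, mul_zero]
    exact (mul_eq_zero.mp h0).resolve_right hv0
  have hroot : ∀ w : Polynomial Fq, Polynomial.derivative w = 0 →
      ∃ z : Polynomial Fq, z ^ p = w := by
    intro w hw
    refine ⟨Polynomial.map ((frobeniusEquiv Fq p).symm : Fq →+* Fq) (Polynomial.contract p w),
      ?_⟩
    have h1 : Polynomial.expand Fq p (Polynomial.contract p w) = w :=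
      Polynomial.expand_contract p hw hp.ne_zero
    have h2 : (frobenius Fq p).comp ((frobeniusEquiv Fq p).symm : Fq →+* Fq) =
        RingHom.id Fq := by
      ext x
      simp [← coe_frobeniusEquiv]
    calc Polynomial.map ((frobeniusEquiv Fq p).symm : Fq →+* Fq)
          (Polynomial.contract p w) ^ p
        = Polynomial.map (frobenius Fq p) (Polynomial.expand Fq p
            (Polynomial.map ((frobeniusEquiv Fq p).symm : Fq →+* Fq)
              (Polynomial.contract p w))) := (Polynomial.map_frobenius_expand (p := p) _).symm
      _ = Polynomial.map (frobenius Fq p)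
            (Polynomial.map ((frobeniusEquiv Fq p).symm : Fq →+* Fq)
              (Polynomial.expand Fq p (Polynomial.contract p w))) := by
            simp [Polynomial.map_expand]
      _ = Polynomial.map ((frobenius Fq p).comp ((frobeniusEquiv Fq p).symm : Fq →+* Fq))
            (Polynomial.expand Fq p (Polynomial.contract p w)) := by
            rw [Polynomial.map_map]
      _ = w := by rw [h2, Polynomial.map_id, h1]
  obtain ⟨w, hw⟩ := hroot u hdu
  obtain ⟨z, hz⟩ := hroot v hdv
  refine ⟨algebraMap (Polynomial Fq) (RatFunc Fq) w /
    algebraMap (Polynomial Fq) (RatFunc Fq) z, ?_⟩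
  rw [div_pow, ← map_pow, ← map_pow, hw, hz, RatFunc.num_div_denom]

end RatFuncLemma

/-- Let `K = F_q(t)` with `q` a power of the prime `p`, and let `∂/∂t` be the `F_q`-linear
derivation of `K` with `∂t/∂t = 1`. If `f ∈ K[x₁^p,…,xₙ^p]` is squarefree as an element of
`K[x₁,…,xₙ]`, then `f` and `∂f/∂t` (applied coefficientwise) are relatively prime in
`K[x₁,…,xₙ]`. -/
theorem squarefree_isRelPrime_deriv (p : ℕ) [Fact p.Prime]
    (Fq : Type*) [Field Fq] [Fintype Fq] [CharP Fq p]
    (n : ℕ) (f : MvPolynomial (Fin n) (RatFunc Fq))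
    (hpow : ∀ m ∈ f.support, ∀ i, p ∣ m i)
    (hf : Squarefree f)
    (D : Derivation Fq (RatFunc Fq) (RatFunc Fq)) (hD : D RatFunc.X = 1) :
    IsRelPrime f
      (∑ m ∈ f.support, MvPolynomial.monomial m (D (MvPolynomial.coeff m f))) := by
  classical
  set K := RatFunc Fq with hK
  have hp : p.Prime := Fact.out
  haveI : CharP K p := charP_of_injective_algebraMap (algebraMap Fq K).injective p
  haveI : CharP (MvPolynomial (Fin n) K) p :=
    charP_of_injective_ringHom (MvPolynomial.C_injective (Fin n) K) p
  have hsum : (∑ m ∈ f.support, MvPolynomial.monomial m (D (MvPolynomial.coeff m f)))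
      = myDP D f := rfl
  rw [hsum]
  intro d hdf hdDf
  by_contra hdu
  have hf0 : f ≠ 0 := hf.ne_zero
  have hd0 : d ≠ 0 := fun h => hf0 (zero_dvd_iff.mp (h ▸ hdf))
  obtain ⟨q, hqirr, hqd⟩ := WfDvdMonoid.exists_irreducible_factor hdu hd0
  have hqprime : Prime q := UniqueFactorizationMonoid.irreducible_iff_prime.mp hqirr
  have hq0 : q ≠ 0 := hqprime.ne_zero
  obtain ⟨m0, hm0⟩ := MvPolynomial.support_nonempty.mpr hq0
  set c := MvPolynomial.coeff m0 q with hc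
  have hc0 : c ≠ 0 := mem_support_iff.mp hm0
  set q' : MvPolynomial (Fin n) K := MvPolynomial.C c⁻¹ * q with hq'def
  have hunit : IsUnit (MvPolynomial.C c⁻¹ : MvPolynomial (Fin n) K) :=
    (isUnit_iff_ne_zero.mpr (inv_ne_zero hc0)).map (MvPolynomial.C : K →+* MvPolynomial (Fin n) K)
  have hassoc : Associated q q' := ⟨hunit.unit, by rw [hq'def, IsUnit.unit_spec, mul_comm]⟩
  have hq'prime : Prime q' := hassoc.prime hqprime
  have hq'0 : q' ≠ 0 := hq'prime.ne_zero
  have hq'f : q' ∣ f := (hassoc.symm.dvd).trans (hqd.trans hdf)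
  have hq'Df : q' ∣ myDP D f := (hassoc.symm.dvd).trans (hqd.trans hdDf)
  have hcoeffm0 : MvPolynomial.coeff m0 q' = 1 := by
    rw [hq'def, coeff_C_mul, ← hc, inv_mul_cancel₀ hc0]
  obtain ⟨h, hfh⟩ := hq'f
  have hq'h : ¬ q' ∣ h := by
    rintro ⟨h', rfl⟩
    exact hq'prime.not_unit (hf q' ⟨h', by rw [hfh]; ring⟩)
  -- Step 1 : the coefficientwise derivative of q' vanishes
  have hDq' : myDP D q' = 0 := by
    have hdvd1 : q' ∣ myDP D q' * h := by
      have h2 : myDP D q' * h = myDP D f - q' * myDP D h := by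
        rw [hfh, myDPMul D q' h]; ring
      rw [h2]
      exact dvd_sub hq'Df (Dvd.intro _ rfl)
    have hdvd2 : q' ∣ myDP D q' := (hq'prime.dvd_or_dvd hdvd1).resolve_right hq'h
    by_contra hne
    obtain ⟨u, hu⟩ := hdvd2
    have hu0 : u ≠ 0 := by rintro rfl; rw [mul_zero] at hu; exact hne hu
    have hdegle : (myDP D q').totalDegree ≤ q'.totalDegree := myTdMono (myDPsupp D q')
    rw [hu, myTotalDegreeMul hq'0 hu0] at hdegle
    have hut : u.totalDegree = 0 := by omega
    have huC : u = MvPolynomial.C (MvPolynomial.coeff 0 u) := myEqC hut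
    have hcoeff0 : MvPolynomial.coeff m0 (myDP D q') = 0 := by
      rw [myCoeffDP, hcoeffm0, Derivation.map_one_eq_zero]
    rw [hu, huC, mul_comm, coeff_C_mul, hcoeffm0, mul_one] at hcoeff0
    rw [hu, huC, hcoeff0, map_zero, mul_zero] at hne
    exact hne rfl
  have hDcoeff : ∀ m, D (MvPolynomial.coeff m q') = 0 := by
    intro m
    rw [← myCoeffDP, hDq', coeff_zero]
  -- Step 2 : all partial derivatives of q' vanish
  have hpf : ∀ i, MvPolynomial.pderiv i f = 0 := by
    intro i
    conv_lhs => rw [f.as_sum]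
    rw [map_sum]
    apply Finset.sum_eq_zero
    intro m hm
    rw [pderiv_monomial]
    have : ((m i : ℕ) : K) = 0 := (CharP.cast_eq_zero_iff K p _).mpr (hpow m hm i)
    rw [this, mul_zero, map_zero]
  have hpq' : ∀ i, MvPolynomial.pderiv i q' = 0 := by
    intro i
    have hzero : MvPolynomial.pderiv i q' * h + q' * MvPolynomial.pderiv i h = 0 := by
      rw [← pderiv_mul, ← hfh, hpf i]
    have hdvd1 : q' ∣ MvPolynomial.pderiv i q' * h := by
      rw [eq_neg_of_add_eq_zero_left hzero]
      exact (Dvd.intro _ rfl).neg_right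
    have hdvd2 : q' ∣ MvPolynomial.pderiv i q' :=
      (hq'prime.dvd_or_dvd hdvd1).resolve_right hq'h
    by_contra hne
    exact hne (myDvdZero hq'0 hdvd2 (myPderivDegLt hne))
  -- Step 3 : all exponents of q' are divisible by p
  have hexp : ∀ m ∈ q'.support, ∀ i, p ∣ m i := by
    intro m hm i
    by_cases h0 : m i = 0
    · rw [h0]; exact dvd_zero p
    have hkey := myCoeffPderiv i q' (m - Finsupp.single i 1)
    rw [hpq' i, coeff_zero] at hkey
    have hle : Finsupp.single i 1 ≤ m :=
      Finsupp.single_le_iff.mpr (Nat.one_le_iff_ne_zero.mpr h0)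
    rw [tsub_add_cancel_of_le hle] at hkey
    rcases mul_eq_zero.mp hkey.symm with hcase | hcase
    · have hval : ((m - Finsupp.single i 1 : Fin n →₀ ℕ)) i + 1 = m i := by
        rw [Finsupp.tsub_apply, Finsupp.single_eq_same]
        omega
      rw [hval] at hcase
      exact (CharP.cast_eq_zero_iff K p _).mp hcase
    · exact absurd hcase (mem_support_iff.mp hm)
  -- Step 4 : q' is a p-th power, contradiction
  have hcoeffpow : ∀ m : Fin n →₀ ℕ, ∃ s : K, s ^ p = MvPolynomial.coeff m q' := by
    intro m
    exact myRatFuncPow p Fq D hD _ (hDcoeff m)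
  choose s hs using hcoeffpow
  set Q : MvPolynomial (Fin n) K :=
    ∑ m ∈ q'.support, MvPolynomial.monomial (Finsupp.mapRange (· / p) (Nat.zero_div p) m) (s m)
    with hQdef
  have hQp : Q ^ p = q' := by
    rw [hQdef, sum_pow_char]
    have hterm : ∀ m ∈ q'.support,
        (MvPolynomial.monomial (Finsupp.mapRange (· / p) (Nat.zero_div p) m) (s m)) ^ p =
          MvPolynomial.monomial m (MvPolynomial.coeff m q') := by
      intro m hm
      rw [monomial_pow, hs m]
      have harg : p • (Finsupp.mapRange (· / p) (Nat.zero_div p) m) = m := by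
        ext i
        rw [Finsupp.smul_apply, Finsupp.mapRange_apply, smul_eq_mul]
        exact Nat.mul_div_cancel' (hexp m hm i)
      rw [harg]
    rw [Finset.sum_congr rfl hterm]
    exact support_sum_monomial_coeff q'
  have hQunit : IsUnit Q := by
    have hq'irr : Irreducible q' := hq'prime.irreducible
    have hfact : q' = Q * Q ^ (p - 1) := by
      rw [← hQp, ← pow_succ']
      congr 1
      have := hp.two_le
      omega
    rcases hq'irr.isUnit_or_isUnit hfact with hcase | hcase
    · exact hcase
    · exact (isUnit_pow_iff (Nat.sub_ne_zero_of_lt hp.one_lt)).mp hcase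
  exact hq'prime.not_unit (hQp ▸ hQunit.pow p)
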